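/- Let e be a finite set of r ≥ 1 nodes and b a positive natural number. Form the cardinality-based gadget: a directed graph on node set V' = e ∪ {e', e''} with two auxiliary nodes, having for each v ∈ e a directed edge (v, e') of weight 1 and a directed edge (e'', v) of weight 1, and a directed edge (e', e'') of weight b. Then for every S ⊆ e, the gadget splitting function satisfies ŵ(S) = min over T ⊆ V' with T ∩ e = S of cut(T) = min { |S|, |e \ S|, b }, where cut(T) = Σ_{i ∈ T, j ∉ T} (weight of directed edge from i to j). -/

import Mathlib

/-- The directed cut function of a weighted directed graph on vertex set `α`. -/
def dirCut {α : Type*} [Fintype α] [DecidableEq α] (w : α → α → ℝ) (T : Finset α) : ℝ :=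
  ∑ i ∈ T, ∑ j ∈ Tᶜ, w i j

/-- Edge weights of the cardinality-based gadget on node set `β ⊕ Fin 2`,
where `Sum.inr 0` is the auxiliary node `e'` and `Sum.inr 1` is `e''`:
each `v ∈ e` has an edge of weight 1 to `e'`, `e''` has an edge of weight 1 to each `v ∈ e`,
and there is an edge of weight `b` from `e'` to `e''`. -/
def cbWeight {β : Type*} (b : ℕ) : (β ⊕ Fin 2) → (β ⊕ Fin 2) → ℝ
  | Sum.inl _, Sum.inr j => if j = 0 then 1 else 0
  | Sum.inr i, Sum.inl _ => if i = 1 then 1 else 0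
  | Sum.inr i, Sum.inr j => if i = 0 ∧ j = 1 then (b : ℝ) else 0
  | Sum.inl _, Sum.inl _ => 0

lemma cut_formula {β : Type*} [Fintype β] [DecidableEq β] (b : ℕ) (S : Finset β)
    (T : Finset (β ⊕ Fin 2)) (h : ∀ v : β, Sum.inl v ∈ T ↔ v ∈ S) :
    dirCut (cbWeight b) T =
      (if Sum.inr 0 ∈ T then 0 else (S.card : ℝ)) +
      (if Sum.inr 0 ∈ T ∧ Sum.inr 1 ∉ T then (b : ℝ) else 0) +
      (if Sum.inr 1 ∈ T then ((Sᶜ : Finset β).card : ℝ) else 0) := by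
  classical
  have h1 : ∀ g : β ⊕ Fin 2 → ℝ, ∑ i ∈ T, g i = ∑ i : β ⊕ Fin 2, if i ∈ T then g i else 0 := by
    intro g; rw [Finset.sum_ite_mem, Finset.univ_inter]
  have h2 : ∀ g : β ⊕ Fin 2 → ℝ, ∑ i ∈ Tᶜ, g i = ∑ i : β ⊕ Fin 2, if i ∈ T then 0 else g i := by
    intro g
    rw [show (∑ i : β ⊕ Fin 2, if i ∈ T then 0 else g i)
        = ∑ i : β ⊕ Fin 2, if i ∈ Tᶜ then g i else 0 from
      Finset.sum_congr rfl fun x _ => by by_cases hx : x ∈ T <;> simp [hx]]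
    rw [Finset.sum_ite_mem, Finset.univ_inter]
  rw [dirCut, h1]
  simp only [h2]
  rw [Fintype.sum_sum_type, Fin.sum_univ_two]
  simp only [Fintype.sum_sum_type, Fin.sum_univ_two, cbWeight, h]
  have hs : ∑ x : β, (if x ∈ S then (1:ℝ) else 0) = S.card := by simp
  have hsc : ∑ x : β, (if x ∈ S then (0:ℝ) else 1) = ((Sᶜ : Finset β).card : ℝ) := by
    have e1 : ∑ x : β, (if x ∈ S then (0:ℝ) else 1) = ∑ x : β, if x ∈ Sᶜ then (1:ℝ) else 0 :=
      Finset.sum_congr rfl fun x _ => by by_cases hx : x ∈ S <;> simp [hx]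
    rw [e1, Finset.sum_ite_mem, Finset.univ_inter, Finset.sum_const, nsmul_eq_mul, mul_one]
  by_cases hp : (Sum.inr 0 : β ⊕ Fin 2) ∈ T <;> by_cases hq : (Sum.inr 1 : β ⊕ Fin 2) ∈ T
  · simp [hp, hq, hs, hsc]
  · simp [hp, hq, hs, hsc]
  · simp [hp, hq, hs, hsc]
  · simp [hp, hq, hs, hsc]

/-- the gadget splitting function of the CB-gadget with parameter `b`
is `ŵ(S) = min {|S|, |e \ S|, b}`. -/
theorem stmt_2 {β : Type*} [Fintype β] [DecidableEq β] (hβ : 1 ≤ Fintype.card β)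
    (b : ℕ) (hb : 0 < b) (S : Finset β) :
    IsLeast {r : ℝ | ∃ T : Finset (β ⊕ Fin 2),
        (∀ v : β, Sum.inl v ∈ T ↔ v ∈ S) ∧ dirCut (cbWeight b) T = r}
      (min (min (S.card : ℝ) ((Sᶜ : Finset β).card : ℝ)) (b : ℝ)) := by
  classical
  set a : ℝ := (S.card : ℝ) with ha
  set c : ℝ := ((Sᶜ : Finset β).card : ℝ) with hc
  have ha0 : 0 ≤ a := by positivity
  have hc0 : 0 ≤ c := by positivity
  constructor
  · -- membership: the min is achieved
    rcases le_total a c with hac | hac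
    · rcases le_total a (b : ℝ) with hab | hab
      · refine ⟨S.image Sum.inl, by simp, ?_⟩
        rw [cut_formula b S _ (by simp)]
        simp [min_eq_left hac, min_eq_left hab]
        exact ha.symm
      · refine ⟨insert (Sum.inr 0) (S.image Sum.inl), by simp, ?_⟩
        rw [cut_formula b S _ (by simp)]
        simp [min_eq_left hac, min_eq_right hab]
    · rcases le_total c (b : ℝ) with hcb | hcb
      · refine ⟨insert (Sum.inr 0) (insert (Sum.inr 1) (S.image Sum.inl)), by simp, ?_⟩
        rw [cut_formula b S _ (by simp)]
        simp [min_eq_right hac, min_eq_left hcb]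
        exact hc.symm
      · refine ⟨insert (Sum.inr 0) (S.image Sum.inl), by simp, ?_⟩
        rw [cut_formula b S _ (by simp)]
        simp [min_eq_right hac, min_eq_right hcb]
  · -- lower bound
    rintro r ⟨T, hT, rfl⟩
    rw [cut_formula b S T hT]
    by_cases hp : (Sum.inr 0 : β ⊕ Fin 2) ∈ T <;> by_cases hq : (Sum.inr 1 : β ⊕ Fin 2) ∈ T
    · simp [hp, hq]
      exact Or.inl (Or.inr le_rfl)
    · simp [hp, hq]
    · simp [hp, hq]
      exact Or.inl (Or.inl (le_add_of_nonneg_right hc0))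
    · simp [hp, hq]
      exact Or.inl (Or.inl le_rfl)
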